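/- arXiv:1903.07093 — 2 statements merged into one kernel-verified Lean document; each statement's English description precedes it below -/
import Mathlib

section
/- Let ν, γ be probability measures on ℝⁿ, K ⊆ ℝⁿ a set, and f : ℝⁿ → ℝⁿ a measurable map with f(x) ∈ K for all x. Then for any coupling π of ν and γ, ∫ ⟨x, f(x)⟩ dν(x) ≤ ∫ sup_{t∈K} ⟨y, t⟩ dγ(y) + (1/2) ∫ |f(x)|² dν(x) + (1/2) ∫ |x − y|² dπ(x, y), assuming all integrals are well-defined and finite. -/
open MeasureTheory Real
open scoped RealInnerProductSpace ENNReal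

noncomputable def stdGaussian (n : ℕ) : Measure (EuclideanSpace ℝ (Fin n)) :=
  (volume : Measure (EuclideanSpace ℝ (Fin n))).withDensity
    fun x => ENNReal.ofReal ((2 * π) ^ (-(n : ℝ) / 2) * Real.exp (-‖x‖ ^ 2 / 2))

noncomputable def lap {n : ℕ} (f : EuclideanSpace ℝ (Fin n) → ℝ)
    (x : EuclideanSpace ℝ (Fin n)) : ℝ :=
  ∑ i, fderiv ℝ (fun y => gradient f y) x (EuclideanSpace.single i 1) i

/-- `y ↦ sup_{t ∈ K} ⟨y, t⟩`. -/
noncomputable def gaussWidthFn {n : ℕ} (K : Set (EuclideanSpace ℝ (Fin n)))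
    (y : EuclideanSpace ℝ (Fin n)) : ℝ :=
  ⨆ t : K, ⟪y, (t : EuclideanSpace ℝ (Fin n))⟫

def IsCoupling {n : ℕ}
    (p : Measure (EuclideanSpace ℝ (Fin n) × EuclideanSpace ℝ (Fin n)))
    (ν γ : Measure (EuclideanSpace ℝ (Fin n))) : Prop :=
  p.map Prod.fst = ν ∧ p.map Prod.snd = γ

/-- Squared quadratic Wasserstein distance. -/
noncomputable def W2sq {n : ℕ} (ν γ : Measure (EuclideanSpace ℝ (Fin n))) : ℝ :=
  sInf {r : ℝ | ∃ p, IsCoupling p ν γ ∧ IsProbabilityMeasure p ∧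
    r = ∫ q, ‖q.1 - q.2‖ ^ 2 ∂p}

theorem coupling_core_estimate (n : ℕ)
    (ν γ : Measure (EuclideanSpace ℝ (Fin n)))
    (p : Measure (EuclideanSpace ℝ (Fin n) × EuclideanSpace ℝ (Fin n)))
    (hν : IsProbabilityMeasure ν) (hγ : IsProbabilityMeasure γ)
    (hp : IsProbabilityMeasure p) (hcoup : IsCoupling p ν γ)
    (K : Set (EuclideanSpace ℝ (Fin n))) (hKne : K.Nonempty)
    (f : EuclideanSpace ℝ (Fin n) → EuclideanSpace ℝ (Fin n))
    (hfm : Measurable f) (hfK : ∀ x, f x ∈ K)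
    (hbdd : ∀ y : EuclideanSpace ℝ (Fin n),
      BddAbove (Set.range fun t : K => ⟪y, (t : EuclideanSpace ℝ (Fin n))⟫))
    (h1 : Integrable (fun x => ⟪x, f x⟫) ν)
    (h2 : Integrable (gaussWidthFn K) γ)
    (h3 : Integrable (fun x => ‖f x‖ ^ 2) ν)
    (h4 : Integrable (fun q => ‖q.1 - q.2‖ ^ 2) p) :
    ∫ x, ⟪x, f x⟫ ∂ν ≤ ∫ y, gaussWidthFn K y ∂γ
      + (1 / 2) * ∫ x, ‖f x‖ ^ 2 ∂ν
      + (1 / 2) * ∫ q, ‖q.1 - q.2‖ ^ 2 ∂p := by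
  obtain ⟨hfst, hsnd⟩ := hcoup
  have h1' := h1; have h2' := h2; have h3' := h3
  rw [← hfst] at h1' h3'
  rw [← hsnd] at h2'
  have i1 : Integrable (fun q : EuclideanSpace ℝ (Fin n) × EuclideanSpace ℝ (Fin n) =>
      ⟪q.1, f q.1⟫) p :=
    (integrable_map_measure h1'.aestronglyMeasurable measurable_fst.aemeasurable).mp h1'
  have i3 : Integrable (fun q : EuclideanSpace ℝ (Fin n) × EuclideanSpace ℝ (Fin n) =>
      ‖f q.1‖ ^ 2) p :=
    (integrable_map_measure h3'.aestronglyMeasurable measurable_fst.aemeasurable).mp h3'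
  have i2 : Integrable (fun q : EuclideanSpace ℝ (Fin n) × EuclideanSpace ℝ (Fin n) =>
      gaussWidthFn K q.2) p :=
    (integrable_map_measure h2'.aestronglyMeasurable measurable_snd.aemeasurable).mp h2'
  have e1 : ∫ x, ⟪x, f x⟫ ∂ν = ∫ q, ⟪q.1, f q.1⟫ ∂p := by
    rw [← hfst, integral_map measurable_fst.aemeasurable h1'.aestronglyMeasurable]
  have e2 : ∫ y, gaussWidthFn K y ∂γ = ∫ q, gaussWidthFn K q.2 ∂p := by
    rw [← hsnd, integral_map measurable_snd.aemeasurable h2'.aestronglyMeasurable]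
  have e3 : ∫ x, ‖f x‖ ^ 2 ∂ν = ∫ q, ‖f q.1‖ ^ 2 ∂p := by
    rw [← hfst, integral_map measurable_fst.aemeasurable h3'.aestronglyMeasurable]
  have key : ∫ q, ⟪q.1, f q.1⟫ ∂p ≤
      ∫ q, (gaussWidthFn K q.2 + (1/2) * ‖f q.1‖ ^ 2 + (1/2) * ‖q.1 - q.2‖ ^ 2) ∂p := by
    refine integral_mono i1 ((i2.add (i3.const_mul _)).add (h4.const_mul _)) ?_
    intro q
    have h5 : ⟪q.2, f q.1⟫ ≤ gaussWidthFn K q.2 :=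
      le_ciSup (hbdd q.2) (⟨f q.1, hfK q.1⟩ : K)
    have h6 : ⟪q.1 - q.2, f q.1⟫ ≤ ‖q.1 - q.2‖ * ‖f q.1‖ := real_inner_le_norm _ _
    have h7 : ⟪q.1, f q.1⟫ = ⟪q.2, f q.1⟫ + ⟪q.1 - q.2, f q.1⟫ := by
      rw [inner_sub_left]; ring
    simp only
    nlinarith [sq_nonneg (‖q.1 - q.2‖ - ‖f q.1‖)]
  rw [e1, e2, e3]
  calc ∫ q, ⟪q.1, f q.1⟫ ∂p ≤
      ∫ q, (gaussWidthFn K q.2 + (1/2) * ‖f q.1‖ ^ 2 + (1/2) * ‖q.1 - q.2‖ ^ 2) ∂p := key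
    _ = ∫ q, gaussWidthFn K q.2 ∂p + (1/2) * ∫ q, ‖f q.1‖ ^ 2 ∂p
        + (1/2) * ∫ q, ‖q.1 - q.2‖ ^ 2 ∂p := by
      have iA : Integrable (fun q : EuclideanSpace ℝ (Fin n) × EuclideanSpace ℝ (Fin n) =>
          gaussWidthFn K q.2 + (1/2) * ‖f q.1‖ ^ 2) p := i2.add (i3.const_mul _)
      rw [integral_add iA (h4.const_mul _), integral_add i2 (i3.const_mul _),
        integral_const_mul, integral_const_mul]
end

section
/- Under the same assumptions as the reverse logarithmic Sobolev inequality (ν = e^f γ with finite entropy, Fisher information, Gaussian width D(ν) of K = {∇f(x)}, and M = −inf Δf finite), one has the reverse transportation cost inequality D_KL(ν||γ) ≤ (1/2) W₂²(ν, γ) + M + D(ν), where W₂ is the quadratic Wasserstein distance. -/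
open MeasureTheory Real
open scoped RealInnerProductSpace ENNReal

namespace RevTransport

variable {n : ℕ}

local notation "E" => EuclideanSpace ℝ (Fin n)

noncomputable def gdens (n : ℕ) (x : EuclideanSpace ℝ (Fin n)) : ℝ :=
  (2 * π) ^ (-(n : ℝ) / 2) * rexp (-‖x‖ ^ 2 / 2)

lemma gdens_pos (x : E) : 0 < gdens n x := by
  unfold gdens
  positivity

lemma continuous_gdens : Continuous (gdens n) := by
  unfold gdens
  fun_prop

lemma stdGaussian_eq :
    stdGaussian n = (volume : Measure E).withDensity (fun x => ENNReal.ofReal (gdens n x)) := rfl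

lemma integrable_gauss (b : ℝ) (hb : 0 < b) :
    Integrable (fun x : E => rexp (-b * ‖x‖^2)) := by
  have h := (GaussianFourier.integrable_cexp_neg_mul_sq_norm_add
      (V := E) (b := (b:ℂ)) (by simpa using hb) 0 0).norm
  refine h.congr ?_
  filter_upwards with x
  simp [Complex.norm_exp]
  left; norm_cast

lemma integral_gauss : ∫ x : E, rexp (-‖x‖^2/2) = (2*π) ^ ((n:ℝ)/2) := by
  have h := GaussianFourier.integral_rexp_neg_mul_sq_norm
      (V := E) (b := (1/2 : ℝ)) (by norm_num)
  simp only [finrank_euclideanSpace, Fintype.card_fin] at h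
  rw [show (π / (1/2:ℝ)) = 2*π by ring] at h
  rw [← h]
  congr 1 with x
  ring_nf

lemma lintegral_gdens : ∫⁻ x : E, ENNReal.ofReal (gdens n x) = 1 := by
  have hi : Integrable (gdens n) := by
    have := (integrable_gauss (n := n) (1/2) (by norm_num)).const_mul ((2 * π) ^ (-(n : ℝ) / 2))
    refine this.congr ?_
    filter_upwards with x
    unfold gdens
    congr 1
    ring_nf
  rw [← ofReal_integral_eq_lintegral_ofReal hi
    (Filter.Eventually.of_forall fun x => (gdens_pos x).le)]
  unfold gdens
  rw [integral_const_mul, integral_gauss, ← Real.rpow_add (by positivity)]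
  rw [show (-(n:ℝ)/2 + (n:ℝ)/2) = 0 by ring, Real.rpow_zero]
  norm_num

instance : IsProbabilityMeasure (stdGaussian n) := by
  constructor
  rw [stdGaussian_eq, withDensity_apply _ MeasurableSet.univ]
  simpa using lintegral_gdens (n := n)



section GradBound

variable {f : EuclideanSpace ℝ (Fin n) → ℝ}

lemma exists_grad_bound
    (hbdd : ∀ y : E, BddAbove (Set.range fun t : Set.range (gradient f) =>
      ⟪y, (t : E)⟫)) :
    ∃ R : ℝ, 0 ≤ R ∧ ∀ x, ‖gradient f x‖ ≤ R := by
  have key : ∀ y : E, ∃ B : ℝ, ∀ x : E, ⟪y, (gradient f x : E)⟫ ≤ B := by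
    intro y
    obtain ⟨B, hB⟩ := hbdd y
    exact ⟨B, fun x => hB (Set.mem_range_self (⟨gradient f x, Set.mem_range_self x⟩ :
      Set.range (gradient f)))⟩
  choose B hB using key
  set c : Fin n → ℝ := fun i => max (B (EuclideanSpace.single i 1)) (B (-EuclideanSpace.single i 1))
  refine ⟨Real.sqrt (∑ i, (c i)^2), Real.sqrt_nonneg _, fun x => ?_⟩
  rw [EuclideanSpace.norm_eq]
  apply Real.sqrt_le_sqrt
  apply Finset.sum_le_sum
  intro i _
  rw [Real.norm_eq_abs, sq_abs]
  have h1 : gradient f x i ≤ c i := by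
    have h := hB (EuclideanSpace.single i 1) x
    rw [EuclideanSpace.inner_single_left] at h
    simp only [map_one, one_mul] at h
    exact le_trans h (le_max_left _ _)
  have h2 : -(c i) ≤ gradient f x i := by
    have := hB (-EuclideanSpace.single i 1) x
    rw [inner_neg_left, EuclideanSpace.inner_single_left] at this
    simp only [map_one, one_mul, starRingEnd_apply, star_trivial] at this
    have : -(gradient f x i) ≤ B (-EuclideanSpace.single i 1) := by simpa using this
    nlinarith [le_max_right (B (EuclideanSpace.single i 1)) (B (-EuclideanSpace.single i 1))]
  exact sq_le_sq' h2 h1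

variable {R : ℝ}

lemma norm_fderiv_le (hf : ContDiff ℝ 2 f) (hR : ∀ x, ‖gradient f x‖ ≤ R) (x : E) :
    ‖fderiv ℝ f x‖ ≤ R := by
  have : gradient f x = (InnerProductSpace.toDual ℝ E).symm (fderiv ℝ f x) := rfl
  calc ‖fderiv ℝ f x‖ = ‖(InnerProductSpace.toDual ℝ E).symm (fderiv ℝ f x)‖ :=
        (LinearIsometryEquiv.norm_map _ _).symm
    _ ≤ R := this ▸ hR x

lemma f_lipschitz (hf : ContDiff ℝ 2 f) (hR : ∀ x, ‖gradient f x‖ ≤ R) (x y : E) :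
    f x ≤ f y + R * ‖x - y‖ := by
  have := Convex.norm_image_sub_le_of_norm_fderiv_le
    (f := f) (C := R) (fun z _ => (hf.differentiable (by norm_num)).differentiableAt)
    (fun z _ => norm_fderiv_le hf hR z) convex_univ (Set.mem_univ y) (Set.mem_univ x)
  have h2 : f x - f y ≤ R * ‖x - y‖ := le_trans (le_abs_self _) this
  linarith


end GradBound

section Width

variable {f : EuclideanSpace ℝ (Fin n) → ℝ} {R : ℝ}

lemma inner_le_width
    (hbdd : ∀ y : E, BddAbove (Set.range fun t : Set.range (gradient f) =>
      ⟪y, (t : E)⟫)) (y x : E) :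
    ⟪y, (gradient f x : E)⟫ ≤ gaussWidthFn (Set.range (gradient f)) y :=
  le_ciSup (hbdd y) (⟨gradient f x, Set.mem_range_self x⟩ : Set.range (gradient f))

lemma width_le (hR : ∀ x, ‖gradient f x‖ ≤ R)
    (hbdd : ∀ y : E, BddAbove (Set.range fun t : Set.range (gradient f) =>
      ⟪y, (t : E)⟫)) (y y' : E) :
    gaussWidthFn (Set.range (gradient f)) y
      ≤ gaussWidthFn (Set.range (gradient f)) y' + R * ‖y - y'‖ := by
  have hne : Nonempty (Set.range (gradient f)) := ⟨⟨gradient f 0, Set.mem_range_self 0⟩⟩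
  apply ciSup_le
  intro t
  obtain ⟨x, hx⟩ := t.2
  have hy : y = y' + (y - y') := by abel
  have h1 : ⟪y, (t : E)⟫ = ⟪y', (t : E)⟫ + ⟪y - y', (t : E)⟫ := by
    conv_lhs => rw [hy]
    exact inner_add_left _ _ _
  rw [h1]
  have h2 : ⟪y', (t : E)⟫ ≤ gaussWidthFn (Set.range (gradient f)) y' := le_ciSup (hbdd y') t
  have h3 : ⟪y - y', (t : E)⟫ ≤ ‖y - y'‖ * ‖(t : E)‖ := real_inner_le_norm _ _
  have h4 : ‖(t : E)‖ ≤ R := hx ▸ hR x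
  have h5 : ‖y - y'‖ * ‖(t : E)‖ ≤ ‖y - y'‖ * R := by
    apply mul_le_mul_of_nonneg_left h4 (norm_nonneg _)
  nlinarith [norm_nonneg (y - y')]

lemma width_zero : gaussWidthFn (Set.range (gradient f)) (0 : E) = 0 := by
  have hne : Nonempty (Set.range (gradient f)) := ⟨⟨gradient f 0, Set.mem_range_self 0⟩⟩
  unfold gaussWidthFn
  simp [inner_zero_left]

lemma abs_width_le (hR : ∀ x, ‖gradient f x‖ ≤ R)
    (hbdd : ∀ y : E, BddAbove (Set.range fun t : Set.range (gradient f) =>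
      ⟪y, (t : E)⟫)) (y : E) :
    |gaussWidthFn (Set.range (gradient f)) y| ≤ R * ‖y‖ := by
  rw [abs_le]
  constructor
  · have h1 := inner_le_width hbdd y 0
    have h2 : -(R * ‖y‖) ≤ ⟪y, (gradient f 0 : E)⟫ := by
      have := real_inner_le_norm y (-(gradient f 0))
      rw [inner_neg_right, norm_neg] at this
      have h4 : ‖gradient f 0‖ ≤ R := hR 0
      nlinarith [norm_nonneg y, norm_nonneg (gradient f 0)]
    linarith
  · have := width_le hR hbdd y 0
    rw [width_zero] at this
    simpa using this

lemma width_continuous (hR : ∀ x, ‖gradient f x‖ ≤ R)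
    (hbdd : ∀ y : E, BddAbove (Set.range fun t : Set.range (gradient f) =>
      ⟪y, (t : E)⟫)) :
    Continuous (gaussWidthFn (Set.range (gradient f)) : E → ℝ) := by
  have hR0 : 0 ≤ R := le_trans (norm_nonneg _) (hR 0)
  have : LipschitzWith (Real.toNNReal R) (gaussWidthFn (Set.range (gradient f)) : E → ℝ) := by
    apply LipschitzWith.of_dist_le_mul
    intro y y'
    rw [Real.dist_eq, Real.coe_toNNReal _ hR0, dist_eq_norm]
    rw [abs_le]
    constructor
    · have := width_le hR hbdd y' y
      rw [norm_sub_rev] at this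
      linarith
    · have := width_le hR hbdd y y'
      linarith
  exact this.continuous

end Width

section MasterInt

lemma exp_bound_aux (a t : ℝ) (ht : 0 ≤ t) : a * t - t^2/2 ≤ a^2 - t^2/4 := by
  nlinarith [sq_nonneg (t/2 - a), sq_nonneg (t - 2*a)]

lemma integrable_stdGaussian_of_le (g : EuclideanSpace ℝ (Fin n) → ℝ)
    (hg : AEStronglyMeasurable g (volume : Measure (EuclideanSpace ℝ (Fin n)))) (C a : ℝ)
    (hbound : ∀ x, |g x| ≤ C * rexp (a * ‖x‖)) : Integrable g (stdGaussian n) := by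
  rw [stdGaussian_eq, integrable_withDensity_iff
    (by exact (continuous_gdens.measurable).ennreal_ofReal)
    (Filter.Eventually.of_forall fun x => ENNReal.ofReal_lt_top)]
  have hC' : 0 ≤ C * (2 * π) ^ (-(n : ℝ) / 2) * rexp (a^2) := by
    have hC : 0 ≤ C := le_trans (abs_nonneg _) (by simpa using hbound 0)
    positivity
  apply Integrable.mono ((integrable_gauss (n := n) (1/4) (by norm_num)).const_mul
    (C * (2 * π) ^ (-(n : ℝ) / 2) * rexp (a^2)))
  · apply hg.mul
    exact (ENNReal.continuous_ofReal.comp continuous_gdens).measurable.ennreal_toReal.aestronglyMeasurable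
  filter_upwards with x
  rw [Real.norm_eq_abs, Real.norm_eq_abs, ENNReal.toReal_ofReal (gdens_pos x).le]
  rw [abs_mul, abs_of_pos (gdens_pos x)]
  have h1 : |g x| * gdens n x ≤ (C * rexp (a * ‖x‖)) * gdens n x := by
    apply mul_le_mul_of_nonneg_right (hbound x) (gdens_pos x).le
  have h2 : (C * rexp (a * ‖x‖)) * gdens n x
      ≤ C * (2 * π) ^ (-(n : ℝ) / 2) * rexp (a^2) * rexp (-(1/4) * ‖x‖^2) := by
    unfold gdens
    have hC : 0 ≤ C := le_trans (abs_nonneg _) (by simpa using hbound 0)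
    have h3 : a * ‖x‖ + -‖x‖^2/2 ≤ a^2 + -(1/4) * ‖x‖^2 := by
      have := exp_bound_aux a ‖x‖ (norm_nonneg x)
      linarith
    calc C * rexp (a * ‖x‖) * ((2 * π) ^ (-(n : ℝ) / 2) * rexp (-‖x‖ ^ 2 / 2))
        = C * (2 * π) ^ (-(n : ℝ) / 2) * rexp (a * ‖x‖ + -‖x‖ ^ 2 / 2) := by
          rw [Real.exp_add]; ring
      _ ≤ C * (2 * π) ^ (-(n : ℝ) / 2) * rexp (a ^ 2 + -(1/4) * ‖x‖ ^ 2) := by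
          apply mul_le_mul_of_nonneg_left _ (by positivity)
          exact Real.exp_le_exp.2 h3
      _ = C * (2 * π) ^ (-(n : ℝ) / 2) * rexp (a^2) * rexp (-(1/4) * ‖x‖^2) := by
          rw [Real.exp_add]; ring
  calc |g x| * gdens n x ≤ C * (2 * π) ^ (-(n : ℝ) / 2) * rexp (a^2) * rexp (-(1/4) * ‖x‖^2) :=
        le_trans h1 h2
    _ ≤ |C * (2 * π) ^ (-(n : ℝ) / 2) * rexp (a^2) * rexp (-(1/4) * ‖x‖^2)| := le_abs_self _

end MasterInt

section Qfun

variable {f : EuclideanSpace ℝ (Fin n) → ℝ} {R : ℝ}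

noncomputable def Qf (f : EuclideanSpace ℝ (Fin n) → ℝ) (y : EuclideanSpace ℝ (Fin n)) : ℝ :=
  ⨆ x : EuclideanSpace ℝ (Fin n), (f x - ‖x - y‖^2/2)

lemma term_le (hf : ContDiff ℝ 2 f) (hR : ∀ x, ‖gradient f x‖ ≤ R) (x y : E) :
    f x - ‖x - y‖^2/2 ≤ f y + R^2/2 := by
  have h1 := f_lipschitz hf hR x y
  nlinarith [sq_nonneg (‖x - y‖ - R)]

lemma Qf_bdd (hf : ContDiff ℝ 2 f) (hR : ∀ x, ‖gradient f x‖ ≤ R) (y : E) :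
    BddAbove (Set.range fun x : E => f x - ‖x - y‖^2/2) := by
  refine ⟨f y + R^2/2, ?_⟩
  rintro r ⟨x, rfl⟩
  exact term_le hf hR x y

lemma le_Qf (hf : ContDiff ℝ 2 f) (hR : ∀ x, ‖gradient f x‖ ≤ R) (x y : E) :
    f x - ‖x - y‖^2/2 ≤ Qf f y :=
  le_ciSup (Qf_bdd hf hR y) x

lemma Qf_le (hf : ContDiff ℝ 2 f) (hR : ∀ x, ‖gradient f x‖ ≤ R) (y : E) :
    Qf f y ≤ f y + R^2/2 :=
  ciSup_le fun x => term_le hf hR x y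

lemma f_le_Qf (hf : ContDiff ℝ 2 f) (hR : ∀ x, ‖gradient f x‖ ≤ R) (y : E) :
    f y ≤ Qf f y := by
  have := le_Qf hf hR y y
  simpa using this

lemma norm_sq_hasFDerivAt (y x : E) :
    HasFDerivAt (fun z : E => ‖z - y‖^2/2)
      (innerSL ℝ (x - y) : E →L[ℝ] ℝ) x := by
  have h0 : HasFDerivAt (fun z : E => z - y) (ContinuousLinearMap.id ℝ E) x :=
    (hasFDerivAt_id x).sub_const y
  have h1 := h0.inner ℝ h0
  have h2 := h1.const_mul (1/2 : ℝ)
  have hfun : (fun z : E => ‖z - y‖^2/2) = fun z : E => (1/2 : ℝ) * (⟪z - y, z - y⟫ : ℝ) := by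
    funext z
    rw [real_inner_self_eq_norm_sq]
    ring
  rw [hfun]
  refine h2.congr_fderiv ?_
  ext v
  simp only [innerSL_apply_apply, ContinuousLinearMap.coe_smul', Pi.smul_apply,
    ContinuousLinearMap.coe_comp', Function.comp_apply, fderivInnerCLM_apply,
    ContinuousLinearMap.prod_apply, ContinuousLinearMap.coe_id', id_eq, smul_eq_mul]
  rw [real_inner_comm (x - y) v]
  ring

lemma foc (hf : ContDiff ℝ 2 f) {x y : E}
    (hmax : ∀ z : E, f z - ‖z - y‖^2/2 ≤ f x - ‖x - y‖^2/2) :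
    gradient f x = x - y := by
  set φ : E → ℝ := fun z => f z - ‖z - y‖^2/2 with hφ
  have hloc : IsLocalMax φ x := Filter.Eventually.of_forall hmax
  have hder : HasFDerivAt φ (fderiv ℝ f x - innerSL ℝ (x - y)) x :=
    ((hf.differentiable (by norm_num)).differentiableAt.hasFDerivAt).sub
      (norm_sq_hasFDerivAt y x)
  have hzero := hloc.hasFDerivAt_eq_zero hder
  have hval : ∀ v : E, ⟪gradient f x, v⟫ = ⟪x - y, v⟫ := by
    intro v
    have := congrArg (fun (L : E →L[ℝ] ℝ) => L v) hzero
    simp only [ContinuousLinearMap.sub_apply, ContinuousLinearMap.zero_apply,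
      innerSL_apply_apply] at this
    have hgrad : (fderiv ℝ f x) v = ⟪gradient f x, v⟫ := by
      rw [show gradient f x = (InnerProductSpace.toDual ℝ E).symm (fderiv ℝ f x) from rfl]
      rw [InnerProductSpace.toDual_symm_apply]
    linarith [hgrad ▸ this]
  exact ext_inner_right ℝ hval

lemma exists_maximizer (hf : ContDiff ℝ 2 f) (hR : ∀ x, ‖gradient f x‖ ≤ R) (y : E) :
    ∃ x : E, (∀ z : E, f z - ‖z - y‖^2/2 ≤ f x - ‖x - y‖^2/2) ∧ gradient f x = x - y := by
  have hR0 : 0 ≤ R := le_trans (norm_nonneg _) (hR 0)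
  set φ : E → ℝ := fun z => f z - ‖z - y‖^2/2 with hφ
  have hφc : Continuous φ := by
    have : Continuous f := hf.continuous
    fun_prop
  obtain ⟨x, hxK, hmax⟩ := (isCompact_closedBall y (2*R+2)).exists_isMaxOn
    ⟨y, Metric.mem_closedBall_self (by linarith)⟩ hφc.continuousOn
  have hglobal : ∀ z : E, φ z ≤ φ x := by
    intro z
    by_cases hz : z ∈ Metric.closedBall y (2*R+2)
    · exact hmax hz
    · have hd : 2*R+2 < ‖z - y‖ := by
        rw [Metric.mem_closedBall, dist_eq_norm] at hz
        linarith [not_le.mp hz]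
      have h1 : φ z ≤ f y + R * ‖z - y‖ - ‖z - y‖^2/2 := by
        have := f_lipschitz hf hR z y
        simp only [hφ]
        linarith
      have h2 : f y + R * ‖z - y‖ - ‖z - y‖^2/2 < f y := by nlinarith
      have h3 : f y = φ y := by simp [hφ]
      have h4 := hmax (Metric.mem_closedBall_self (by linarith : (0:ℝ) ≤ 2*R+2))
      calc φ z ≤ f y + R * ‖z - y‖ - ‖z - y‖^2/2 := h1
        _ ≤ f y := le_of_lt h2
        _ = φ y := h3
        _ ≤ φ x := h4
  exact ⟨x, hglobal, foc hf hglobal⟩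

lemma Qf_eq_at_max (hf : ContDiff ℝ 2 f) (hR : ∀ x, ‖gradient f x‖ ≤ R) {x y : E}
    (hmax : ∀ z : E, f z - ‖z - y‖^2/2 ≤ f x - ‖x - y‖^2/2) :
    Qf f y = f x - ‖x - y‖^2/2 :=
  le_antisymm (ciSup_le hmax) (le_Qf hf hR x y)

lemma Qf_sub_le (hf : ContDiff ℝ 2 f) (hR : ∀ x, ‖gradient f x‖ ≤ R) (y y' : E) :
    Qf f y - Qf f y' ≤ R * ‖y - y'‖ + ‖y - y'‖^2/2 := by
  obtain ⟨x, hmax, hfoc⟩ := exists_maximizer hf hR y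
  have h1 : Qf f y = f x - ‖x - y‖^2/2 := Qf_eq_at_max hf hR hmax
  have h2 : f x - ‖x - y'‖^2/2 ≤ Qf f y' := le_Qf hf hR x y'
  have hxy : ‖x - y‖ ≤ R := by
    rw [← hfoc]; exact hR x
  have h3 : ‖x - y'‖ ≤ ‖x - y‖ + ‖y - y'‖ := by
    have := norm_sub_le_norm_sub_add_norm_sub x y y'
    linarith
  have h4 : ‖x - y'‖^2 ≤ ‖x - y‖^2 + 2 * R * ‖y - y'‖ + ‖y - y'‖^2 := by
    nlinarith [norm_nonneg (x - y'), norm_nonneg (x - y), norm_nonneg (y - y')]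
  linarith

lemma Qf_continuous (hf : ContDiff ℝ 2 f) (hR : ∀ x, ‖gradient f x‖ ≤ R) :
    Continuous (Qf f) := by
  have hR0 : 0 ≤ R := le_trans (norm_nonneg _) (hR 0)
  rw [Metric.continuous_iff]
  intro y ε hε
  refine ⟨min 1 (ε/(R+1)), lt_min one_pos (by positivity), fun y' hy' => ?_⟩
  have hd1 : dist y' y < 1 := lt_of_lt_of_le hy' (min_le_left _ _)
  have hd2 : dist y' y < ε/(R+1) := lt_of_lt_of_le hy' (min_le_right _ _)
  have hdn : dist y' y = ‖y' - y‖ := dist_eq_norm _ _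
  rw [Real.dist_eq, abs_lt]
  have hb1 := Qf_sub_le hf hR y' y
  have hb2 := Qf_sub_le hf hR y y'
  rw [norm_sub_rev y y'] at hb2
  have hd0 : 0 ≤ ‖y' - y‖ := norm_nonneg _
  have hsq : ‖y' - y‖^2 ≤ ‖y' - y‖ := by nlinarith [hdn ▸ hd1]
  have key : R * ‖y' - y‖ + ‖y' - y‖^2/2 < ε := by
    have h5 : R * ‖y' - y‖ + ‖y' - y‖^2/2 ≤ (R+1) * ‖y' - y‖ := by nlinarith
    have h6 : (R+1) * ‖y' - y‖ < ε := by
      have : ‖y' - y‖ < ε/(R+1) := hdn ▸ hd2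
      calc (R+1) * ‖y' - y‖ < (R+1) * (ε/(R+1)) := by
            apply mul_lt_mul_of_pos_left this (by linarith)
        _ = ε := by field_simp
    linarith
  constructor <;> linarith

lemma contDiff_gradient (hf : ContDiff ℝ 2 f) : ContDiff ℝ 1 (fun y : E => gradient f y) := by
  unfold gradient
  exact (InnerProductSpace.toDual ℝ E).symm.contDiff.comp (hf.fderiv_right (by norm_num))

lemma second_order (hf : ContDiff ℝ 2 f) {x y : E}
    (hmax : ∀ z : E, f z - ‖z - y‖^2/2 ≤ f x - ‖x - y‖^2/2) (v : E) :
    ⟪v, (fderiv ℝ (fun z : E => gradient f z) x) v⟫ ≤ ‖v‖^2 := by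
  by_contra hcon
  push_neg at hcon
  have hfoc := foc hf hmax
  have hgrad_diff : ∀ z : E, HasFDerivAt (fun w : E => gradient f w)
      (fderiv ℝ (fun w : E => gradient f w) z) z := fun z =>
    (((contDiff_gradient hf).differentiable one_ne_zero) z).hasFDerivAt
  set L : ℝ → E := fun t => x + t • v with hL
  have hL0 : L 0 = x := by simp [hL]
  have hLder : ∀ t : ℝ, HasDerivAt L v t := by
    intro t
    have h1 : HasDerivAt (fun s : ℝ => s • v) ((1:ℝ) • v) t := (hasDerivAt_id t).smul_const v
    simpa [hL] using h1.const_add x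
  set g : ℝ → ℝ := fun t => f (L t) - ‖L t - y‖^2/2 with hg
  set g1 : ℝ → ℝ := fun t => ⟪v, (gradient f (L t) : E)⟫ - ⟪v, (L t - y : E)⟫ with hg1
  set g2 : ℝ → ℝ := fun t => ⟪v, ((fderiv ℝ (fun z : E => gradient f z) (L t)) v : E)⟫ - ‖v‖^2
    with hg2
  -- derivative of g is g1
  have hgder : ∀ t : ℝ, HasDerivAt g (g1 t) t := by
    intro t
    have hφ : HasFDerivAt (fun z : E => f z - ‖z - y‖^2/2)
        (fderiv ℝ f (L t) - innerSL ℝ (L t - y)) (L t) :=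
      ((hf.differentiable (by norm_num)).differentiableAt.hasFDerivAt).sub
        (norm_sq_hasFDerivAt y (L t))
    have h2 := hφ.comp_hasDerivAt t (hLder t)
    have hval : (fderiv ℝ f (L t) - innerSL ℝ (L t - y)) v = g1 t := by
      simp only [ContinuousLinearMap.sub_apply, innerSL_apply_apply, hg1]
      have hgr : (fderiv ℝ f (L t)) v = ⟪(gradient f (L t) : E), v⟫ := by
        rw [show gradient f (L t) = (InnerProductSpace.toDual ℝ E).symm (fderiv ℝ f (L t))
          from rfl]
        rw [InnerProductSpace.toDual_symm_apply]
      rw [hgr, real_inner_comm (L t - y) v, real_inner_comm (gradient f (L t)) v]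
    exact hval ▸ h2
  -- derivative of g1 is g2
  have hg1der : ∀ t : ℝ, HasDerivAt g1 (g2 t) t := by
    intro t
    have hpart1 : HasDerivAt (fun s : ℝ => (innerSL ℝ v) (gradient f (L s)))
        ((innerSL ℝ v) ((fderiv ℝ (fun z : E => gradient f z) (L t)) v)) t := by
      have hcomp := ((innerSL ℝ v).hasFDerivAt.comp (L t)
        (hgrad_diff (L t))).comp_hasDerivAt t (hLder t)
      exact hcomp
    have hpart2 : HasDerivAt (fun s : ℝ => (innerSL ℝ v) (L s - y))
        ((innerSL ℝ v) v) t := by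
      have hline : HasDerivAt (fun s : ℝ => L s - y) v t := (hLder t).sub_const y
      exact ((innerSL ℝ v).hasFDerivAt).comp_hasDerivAt t hline
    have h3 := hpart1.sub hpart2
    have hval : (innerSL ℝ v) ((fderiv ℝ (fun z : E => gradient f z) (L t)) v)
        - (innerSL ℝ v) v = g2 t := by
      simp only [innerSL_apply_apply, hg2]
      rw [real_inner_self_eq_norm_sq]
    have hfun : g1 = fun s : ℝ => (innerSL ℝ v) (gradient f (L s)) - (innerSL ℝ v) (L s - y) := by
      funext s
      simp only [hg1, innerSL_apply_apply]
    rw [hfun]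
    exact hval ▸ h3
  -- continuity of g2 and positivity near 0
  have hg2cont : Continuous g2 := by
    have hT : Continuous (fun z : E => fderiv ℝ (fun w : E => gradient f w) z) :=
      (contDiff_gradient hf).continuous_fderiv one_ne_zero
    have hLc : Continuous L := by fun_prop
    have h1 : Continuous (fun t : ℝ => (fderiv ℝ (fun w : E => gradient f w) (L t)) v) :=
      (hT.comp hLc).clm_apply continuous_const
    exact (continuous_const.inner h1).sub continuous_const
  have hg2pos0 : 0 < g2 0 := by
    simp only [hg2, hL0]
    linarith
  obtain ⟨δ, hδpos, hδ⟩ := Metric.continuousAt_iff.mp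
    (hg2cont.continuousAt : ContinuousAt g2 0) (g2 0) hg2pos0
  have hg2pos : ∀ t : ℝ, |t| < δ → 0 < g2 t := by
    intro t ht
    have h7 := hδ (show dist t 0 < δ by rw [Real.dist_eq, sub_zero]; exact ht)
    rw [Real.dist_eq, abs_lt] at h7
    linarith [h7.1]
  -- g1 is strictly monotone on [0, δ/2], and g1 0 = 0
  have hIcc : Set.OrdConnected (Set.Icc (0:ℝ) (δ/2)) := (convex_Icc _ _).ordConnected
  have hg1mono : StrictMonoOn g1 (Set.Icc 0 (δ/2)) := by
    apply strictMonoOn_of_deriv_pos (convex_Icc _ _)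
    · exact Continuous.continuousOn (continuous_iff_continuousAt.mpr
        (fun t => (hg1der t).continuousAt))
    · intro t ht
      rw [interior_Icc] at ht
      rw [(hg1der t).deriv]
      apply hg2pos
      rw [abs_lt]
      constructor <;> [linarith [ht.1]; linarith [ht.2]]
  have hg10 : g1 0 = 0 := by
    simp only [hg1, hL0, hfoc]
    ring
  have hg1pos : ∀ t : ℝ, t ∈ Set.Ioc 0 (δ/2) → 0 < g1 t := by
    intro t ht
    have := hg1mono (Set.mem_Icc.mpr ⟨le_refl 0, by linarith [hδpos]⟩)
      (Set.mem_Icc.mpr ⟨ht.1.le, ht.2⟩) ht.1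
    linarith [hg10 ▸ this]
  -- g is strictly monotone on [0, δ/2]
  have hgmono : StrictMonoOn g (Set.Icc 0 (δ/2)) := by
    apply strictMonoOn_of_deriv_pos (convex_Icc _ _)
    · exact Continuous.continuousOn (continuous_iff_continuousAt.mpr
        (fun t => (hgder t).continuousAt))
    · intro t ht
      rw [interior_Icc] at ht
      rw [(hgder t).deriv]
      exact hg1pos t ⟨ht.1, ht.2.le⟩
  have hlt : g 0 < g (δ/2) := hgmono (Set.mem_Icc.mpr ⟨le_refl 0, by linarith⟩)
    (Set.mem_Icc.mpr ⟨by linarith, le_refl _⟩) (by linarith)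
  have hle : g (δ/2) ≤ g 0 := by
    simp only [hg, hL0]
    exact hmax (L (δ/2))
  linarith

lemma hess_symm (hf : ContDiff ℝ 2 f) (x u v : E) :
    ⟪(fderiv ℝ (fun z : E => gradient f z) x) u, v⟫
      = ⟪u, (fderiv ℝ (fun z : E => gradient f z) x) v⟫ := by
  have hf' : ∀ z : E, HasFDerivAt f (fderiv ℝ f z) z := fun z =>
    ((hf.differentiable (by norm_num)) z).hasFDerivAt
  have hf'' : HasFDerivAt (fderiv ℝ f) (fderiv ℝ (fderiv ℝ f) x) x := by
    have : ContDiff ℝ 1 (fderiv ℝ f) := hf.fderiv_right (by norm_num)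
    exact ((this.differentiable one_ne_zero) x).hasFDerivAt
  have hsymm := second_derivative_symmetric hf' hf''
  have hkey : ∀ w : E, fderiv ℝ (fun z : E => gradient f z) x w
      = (InnerProductSpace.toDual ℝ E).symm ((fderiv ℝ (fderiv ℝ f) x) w) := by
    intro w
    have hcomp : (fun z : E => gradient f z)
        = (InnerProductSpace.toDual ℝ E).symm ∘ (fderiv ℝ f) := rfl
    rw [hcomp, LinearIsometryEquiv.comp_fderiv]
    rfl
  rw [hkey u, hkey v, InnerProductSpace.toDual_symm_apply]
  have h1 : (⟪u, ((InnerProductSpace.toDual ℝ E).symm ((fderiv ℝ (fderiv ℝ f) x) v) : E)⟫ : ℝ)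
      = ⟪((InnerProductSpace.toDual ℝ E).symm ((fderiv ℝ (fderiv ℝ f) x) v) : E), u⟫ :=
    real_inner_comm _ _
  rw [h1, InnerProductSpace.toDual_symm_apply]
  exact hsymm u v

end Qfun

section DetBound

variable {f : EuclideanSpace ℝ (Fin n) → ℝ}

lemma det_bound_of_psd {T : EuclideanSpace ℝ (Fin n) →L[ℝ] EuclideanSpace ℝ (Fin n)}
    (hsym : ∀ u v : E, ⟪T u, v⟫ = ⟪u, T v⟫)
    (hpsd : ∀ v : E, ⟪v, (T v : E)⟫ ≤ ‖v‖^2) :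
    |(ContinuousLinearMap.id ℝ E - T).det|
      ≤ rexp (-(LinearMap.trace ℝ E (T : E →ₗ[ℝ] E))) := by
  set C : E →ₗ[ℝ] E := LinearMap.id - (T : E →ₗ[ℝ] E) with hC
  have hCsym : C.IsSymmetric := by
    intro u v
    simp only [hC, LinearMap.sub_apply, LinearMap.id_apply, ContinuousLinearMap.coe_coe,
      inner_sub_left, inner_sub_right]
    rw [hsym u v]
  have hrk : Module.finrank ℝ E = n := finrank_euclideanSpace_fin
  set b := hCsym.eigenvectorBasis hrk with hb
  set μ := hCsym.eigenvalues hrk with hμ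
  have heig : ∀ i, C (b i) = μ i • b i := fun i =>
    (hCsym.hasEigenvector_eigenvectorBasis hrk i).apply_eq_smul
  have hμnn : ∀ i, 0 ≤ μ i := by
    intro i
    have h1 : (⟪b i, C (b i)⟫ : ℝ) = μ i := by
      rw [heig i, real_inner_smul_right, real_inner_self_eq_norm_sq, b.orthonormal.1 i]
      norm_num
    have h2 : (0:ℝ) ≤ ⟪b i, C (b i)⟫ := by
      simp only [hC, LinearMap.sub_apply, LinearMap.id_apply, ContinuousLinearMap.coe_coe,
        inner_sub_right]
      have := hpsd (b i)
      have h3 : (⟪b i, b i⟫ : ℝ) = ‖b i‖^2 := real_inner_self_eq_norm_sq _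
      linarith
    linarith
  have hmat : ∀ i j, LinearMap.toMatrix b.toBasis b.toBasis C i j
      = Matrix.diagonal μ i j := by
    intro i j
    rw [LinearMap.toMatrix_apply]
    have hbj : b.toBasis j = b j := by simp [OrthonormalBasis.coe_toBasis]
    rw [hbj, heig j, _root_.map_smul, ← hbj, Module.Basis.repr_self]
    by_cases hij : i = j
    · subst hij
      simp [Matrix.diagonal_apply]
    · simp [Matrix.diagonal_apply, hij, Finsupp.single_apply, Ne.symm hij]
  have hdet : LinearMap.det C = ∏ i, μ i := by
    rw [← LinearMap.det_toMatrix b.toBasis]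
    rw [show LinearMap.toMatrix b.toBasis b.toBasis C = Matrix.diagonal μ from by
      ext i j; exact hmat i j]
    exact Matrix.det_diagonal
  have htr : LinearMap.trace ℝ E C = ∑ i, μ i := by
    rw [LinearMap.trace_eq_matrix_trace ℝ b.toBasis]
    rw [show LinearMap.toMatrix b.toBasis b.toBasis C = Matrix.diagonal μ from by
      ext i j; exact hmat i j]
    exact Matrix.trace_diagonal μ
  have hdetnn : 0 ≤ LinearMap.det C := hdet ▸ Finset.prod_nonneg (fun i _ => hμnn i)
  have hprod : ∏ i, μ i ≤ rexp (∑ i, μ i - n) := by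
    have h1 : ∀ i ∈ Finset.univ, μ i ≤ rexp (μ i - 1) := by
      intro i _
      have := Real.add_one_le_exp (μ i - 1)
      linarith
    calc ∏ i, μ i ≤ ∏ i, rexp (μ i - 1) :=
          Finset.prod_le_prod (fun i _ => hμnn i) h1
      _ = rexp (∑ i, (μ i - 1)) := by rw [← Real.exp_sum]
      _ = rexp (∑ i, μ i - n) := by
          congr 1
          rw [Finset.sum_sub_distrib]
          simp
  have htrC : LinearMap.trace ℝ E C = n - LinearMap.trace ℝ E (T : E →ₗ[ℝ] E) := by
    rw [hC, map_sub, LinearMap.trace_id, hrk]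
  have hdet2 : (ContinuousLinearMap.id ℝ E - T).det = LinearMap.det C := by
    unfold ContinuousLinearMap.det
    congr 1
  rw [hdet2, abs_of_nonneg hdetnn, hdet]
  calc ∏ i, μ i ≤ rexp (∑ i, μ i - n) := hprod
    _ = rexp (LinearMap.trace ℝ E C - n) := by rw [htr]
    _ = rexp (-(LinearMap.trace ℝ E (T : E →ₗ[ℝ] E))) := by rw [htrC]; ring_nf

lemma trace_eq_lap (f : EuclideanSpace ℝ (Fin n) → ℝ) (x : E) :
    LinearMap.trace ℝ E ((fderiv ℝ (fun z : E => gradient f z) x : E →ₗ[ℝ] E)) = lap f x := by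
  rw [LinearMap.trace_eq_matrix_trace ℝ (EuclideanSpace.basisFun (Fin n) ℝ).toBasis]
  unfold lap
  rw [Matrix.trace]
  apply Finset.sum_congr rfl
  intro i _
  rw [Matrix.diag]
  rw [LinearMap.toMatrix_apply]
  simp only [OrthonormalBasis.coe_toBasis, EuclideanSpace.basisFun_apply,
    OrthonormalBasis.coe_toBasis_repr_apply, EuclideanSpace.basisFun_repr,
    ContinuousLinearMap.coe_coe]

end DetBound

section CoV

lemma cov_surj (A : Set (EuclideanSpace ℝ (Fin n))) (hA : MeasurableSet A)
    (S : EuclideanSpace ℝ (Fin n) → EuclideanSpace ℝ (Fin n))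
    (T' : EuclideanSpace ℝ (Fin n) → EuclideanSpace ℝ (Fin n) →L[ℝ] EuclideanSpace ℝ (Fin n))
    (hS : ∀ x, HasFDerivAt S (T' x) x)
    (hdet : Measurable (fun x : E => (T' x).det))
    (hsurj : ∀ y : E, ∃ x ∈ A, S x = y)
    (V : E → ℝ) (hV : Continuous V) (hVnn : ∀ y, 0 ≤ V y) :
    ∫⁻ y, ENNReal.ofReal (V y)
      ≤ ∫⁻ x in A, ENNReal.ofReal (V (S x)) * ENNReal.ofReal (|(T' x).det|) := by
  have hScont : Continuous S := by
    apply continuous_iff_continuousAt.mpr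
    exact fun x => (hS x).continuousAt
  set d : E → ℝ≥0∞ := fun x => ENNReal.ofReal (|(T' x).det|) with hd
  have hdmeas : Measurable d := (hdet.abs).ennreal_ofReal
  set μw : Measure E := ((volume : Measure E).restrict A).withDensity d with hμw
  have hlayer1 : ∫⁻ y, ENNReal.ofReal (V y)
      = ∫⁻ t in Set.Ioi (0:ℝ), (volume : Measure E) {y | t < V y} :=
    lintegral_eq_lintegral_meas_lt _ (Filter.Eventually.of_forall hVnn) hV.aemeasurable
  have hlayer2 : ∫⁻ x, ENNReal.ofReal (V (S x)) ∂μw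
      = ∫⁻ t in Set.Ioi (0:ℝ), μw {x | t < V (S x)} :=
    lintegral_eq_lintegral_meas_lt _ (Filter.Eventually.of_forall fun x => hVnn (S x))
      (hV.comp hScont).aemeasurable
  have hcompare : ∀ t : ℝ, (volume : Measure E) {y | t < V y} ≤ μw {x | t < V (S x)} := by
    intro t
    have hBt : MeasurableSet {x : E | t < V (S x)} :=
      measurableSet_lt measurable_const (hV.comp hScont).measurable
    have hsub : {y : E | t < V y} ⊆ S '' (A ∩ {x | t < V (S x)}) := by
      intro y hy
      obtain ⟨x, hxA, hxS⟩ := hsurj y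
      exact ⟨x, ⟨hxA, by simp only [Set.mem_setOf_eq, hxS]; exact hy⟩, hxS⟩
    calc (volume : Measure E) {y | t < V y}
        ≤ (volume : Measure E) (S '' (A ∩ {x | t < V (S x)})) := measure_mono hsub
      _ ≤ ∫⁻ x in A ∩ {x | t < V (S x)}, ENNReal.ofReal (|(T' x).det|) :=
          MeasureTheory.addHaar_image_le_lintegral_abs_det_fderiv volume
            (hA.inter hBt) (fun x _ => (hS x).hasFDerivWithinAt)
      _ = μw {x | t < V (S x)} := by
          rw [hμw, withDensity_apply _ hBt, Measure.restrict_restrict hBt, Set.inter_comm]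
  have hfinal : ∫⁻ x, ENNReal.ofReal (V (S x)) ∂μw
      = ∫⁻ x in A, ENNReal.ofReal (V (S x)) * ENNReal.ofReal (|(T' x).det|) := by
    have hg : Measurable fun x : E => ENNReal.ofReal (V (S x)) :=
      ((hV.comp hScont).measurable :
        Measurable fun x : E => V (S x)).ennreal_ofReal
    rw [hμw, lintegral_withDensity_eq_lintegral_mul _ hdmeas hg]
    apply lintegral_congr
    intro x
    simp only [Pi.mul_apply, hd]
    ring
  rw [hlayer1, ← hfinal, hlayer2]
  exact lintegral_mono hcompare

end CoV

section Key

variable {f : EuclideanSpace ℝ (Fin n) → ℝ} {R M : ℝ}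

lemma nu_lintegral_one
    (hν : IsProbabilityMeasure ((stdGaussian n).withDensity
      fun x => ENNReal.ofReal (Real.exp (f x))))
    (hfc : Continuous f) :
    ∫⁻ x : E, ENNReal.ofReal (rexp (f x) * gdens n x) = 1 := by
  have h1 := hν.measure_univ
  rw [withDensity_apply _ MeasurableSet.univ, Measure.restrict_univ] at h1
  have hg : Measurable fun x : E => ENNReal.ofReal (rexp (f x)) :=
    ((Real.continuous_exp.comp hfc).measurable :
      Measurable fun x : E => rexp (f x)).ennreal_ofReal
  rw [stdGaussian_eq, lintegral_withDensity_eq_lintegral_mul _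
    (continuous_gdens.measurable.ennreal_ofReal) hg] at h1
  rw [← h1]
  apply lintegral_congr
  intro x
  simp only [Pi.mul_apply]
  rw [← ENNReal.ofReal_mul (gdens_pos x).le, mul_comm]

lemma key_lintegral (hf : ContDiff ℝ 2 f) (hR : ∀ x, ‖gradient f x‖ ≤ R)
    (hbdd : ∀ y : E, BddAbove (Set.range fun t : Set.range (gradient f) =>
      ⟪y, (t : E)⟫))
    (hMlb : ∀ x : E, -M ≤ lap f x)
    (hν1 : ∫⁻ x : E, ENNReal.ofReal (rexp (f x) * gdens n x) = 1) :
    ∫⁻ y : E, ENNReal.ofReal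
        (rexp (Qf f y - gaussWidthFn (Set.range (gradient f)) y) * gdens n y)
      ≤ ENNReal.ofReal (rexp M) := by
  set h : E → ℝ := gaussWidthFn (Set.range (gradient f)) with hh
  set S : E → E := fun x => x - gradient f x with hS
  set T' : E → E →L[ℝ] E := fun x =>
    ContinuousLinearMap.id ℝ E - fderiv ℝ (fun z : E => gradient f z) x with hT'
  set A : Set E := {x : E | ∀ z : E, f z - ‖z - S x‖^2/2 ≤ f x - ‖x - S x‖^2/2} with hA
  have hgradc : Continuous (fun z : E => gradient f z) := (contDiff_gradient hf).continuous
  have hSder : ∀ x : E, HasFDerivAt S (T' x) x := by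
    intro x
    exact (hasFDerivAt_id x).sub
      (((contDiff_gradient hf).differentiable one_ne_zero x).hasFDerivAt)
  have hScont : Continuous S := continuous_id.sub hgradc
  have hAmeas : MeasurableSet A := by
    have hclosed : IsClosed A := by
      have heq : A = ⋂ z : E, {x : E | f z - ‖z - S x‖^2/2 ≤ f x - ‖x - S x‖^2/2} := by
        ext x
        simp only [hA, Set.mem_setOf_eq, Set.mem_iInter]
      rw [heq]
      apply isClosed_iInter
      intro z
      apply isClosed_le
      · apply Continuous.sub continuous_const
        apply Continuous.div_const
        apply Continuous.pow
        exact (continuous_const.sub hScont).norm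
      · apply Continuous.sub hf.continuous
        apply Continuous.div_const
        apply Continuous.pow
        exact (continuous_id.sub hScont).norm
    exact hclosed.measurableSet
  have hmem_max : ∀ x ∈ A, ∀ z : E, f z - ‖z - S x‖^2/2 ≤ f x - ‖x - S x‖^2/2 := fun x hx => hx
  have hsurj : ∀ y : E, ∃ x ∈ A, S x = y := by
    intro y
    obtain ⟨x, hmax, hfoc⟩ := exists_maximizer hf hR y
    have hSx : S x = y := by
      rw [hS]
      simp only
      rw [hfoc]
      abel
    exact ⟨x, by rw [hA, Set.mem_setOf_eq, hSx]; exact hmax, hSx⟩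
  have hdetm : Measurable (fun x : E => (T' x).det) := by
    have hT'c : Continuous T' := by
      apply Continuous.sub continuous_const
      exact (contDiff_gradient hf).continuous_fderiv one_ne_zero
    exact (ContinuousLinearMap.continuous_det.comp hT'c).measurable
  set V : E → ℝ := fun y => rexp (Qf f y - h y) * gdens n y with hV
  have hVc : Continuous V := by
    apply Continuous.mul _ continuous_gdens
    apply Real.continuous_exp.comp
    exact (Qf_continuous hf hR).sub (width_continuous hR hbdd)
  have hVnn : ∀ y, 0 ≤ V y := fun y => mul_nonneg (Real.exp_nonneg _) (gdens_pos y).le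
  have hcov := cov_surj A hAmeas S T' hSder hdetm hsurj V hVc hVnn
  have hpoint : ∀ x ∈ A, ENNReal.ofReal (V (S x)) * ENNReal.ofReal (|(T' x).det|)
      ≤ ENNReal.ofReal (rexp M) * ENNReal.ofReal (rexp (f x) * gdens n x) := by
    intro x hx
    have hmax := hmem_max x hx
    have hxs : x - S x = gradient f x := by rw [hS]; simp only; abel
    have hQ : Qf f (S x) = f x - ‖gradient f x‖^2/2 := by
      rw [Qf_eq_at_max hf hR hmax, hxs]
    -- second order condition
    have hpsd : ∀ v : E, (⟪v, ((fderiv ℝ (fun z : E => gradient f z) x) v : E)⟫ : ℝ) ≤ ‖v‖^2 :=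
      second_order hf hmax
    have hdetb : |(T' x).det| ≤ rexp M := by
      have h1 := det_bound_of_psd (T := fderiv ℝ (fun z : E => gradient f z) x)
        (hess_symm hf x) hpsd
      rw [trace_eq_lap f x] at h1
      calc |(T' x).det| ≤ rexp (-(lap f x)) := h1
        _ ≤ rexp M := Real.exp_le_exp.2 (by linarith [hMlb x])
    -- density transformation
    have hnorm : ‖S x‖^2 = ‖x‖^2 - 2 * ⟪x, (gradient f x : E)⟫ + ‖gradient f x‖^2 := by
      rw [hS]
      simp only
      exact norm_sub_sq_real x (gradient f x)
    have hgd : gdens n (S x) = gdens n x * rexp (⟪x, (gradient f x : E)⟫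
        - ‖gradient f x‖^2/2) := by
      unfold gdens
      rw [hnorm, mul_assoc, ← Real.exp_add]
      congr 2
      ring
    have hinner : (⟪x, (gradient f x : E)⟫ : ℝ) - ‖gradient f x‖^2 ≤ h (S x) := by
      have h2 : (⟪(S x : E), (gradient f x : E)⟫ : ℝ) ≤ h (S x) := inner_le_width hbdd (S x) x
      have h3 : (⟪(S x : E), (gradient f x : E)⟫ : ℝ)
          = ⟪x, (gradient f x : E)⟫ - ‖gradient f x‖^2 := by
        rw [hS]
        simp only
        rw [inner_sub_left, real_inner_self_eq_norm_sq]
      linarith [h3 ▸ h2]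
    have hVval : V (S x) = rexp ((f x - ‖gradient f x‖^2/2 - h (S x))
        + (⟪x, (gradient f x : E)⟫ - ‖gradient f x‖^2/2)) * gdens n x := by
      rw [hV]
      simp only
      rw [hQ, hgd, Real.exp_add]
      ring
    have hexp : (f x - ‖gradient f x‖^2/2 - h (S x))
        + (⟪x, (gradient f x : E)⟫ - ‖gradient f x‖^2/2) ≤ f x := by linarith
    have hVle : V (S x) ≤ rexp (f x) * gdens n x := by
      rw [hVval]
      exact mul_le_mul_of_nonneg_right (Real.exp_le_exp.2 hexp) (gdens_pos x).le
    calc ENNReal.ofReal (V (S x)) * ENNReal.ofReal (|(T' x).det|)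
        ≤ ENNReal.ofReal (rexp (f x) * gdens n x) * ENNReal.ofReal (rexp M) := by
          apply mul_le_mul' (ENNReal.ofReal_le_ofReal hVle) (ENNReal.ofReal_le_ofReal hdetb)
      _ = ENNReal.ofReal (rexp M) * ENNReal.ofReal (rexp (f x) * gdens n x) := mul_comm _ _
  calc ∫⁻ y : E, ENNReal.ofReal (V y)
      ≤ ∫⁻ x in A, ENNReal.ofReal (V (S x)) * ENNReal.ofReal (|(T' x).det|) := hcov
    _ ≤ ∫⁻ x in A, ENNReal.ofReal (rexp M) * ENNReal.ofReal (rexp (f x) * gdens n x) := by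
        apply setLIntegral_mono' hAmeas hpoint
    _ ≤ ∫⁻ x : E, ENNReal.ofReal (rexp M) * ENNReal.ofReal (rexp (f x) * gdens n x) :=
        setLIntegral_le_lintegral _ _
    _ = ENNReal.ofReal (rexp M) * ∫⁻ x : E, ENNReal.ofReal (rexp (f x) * gdens n x) := by
        rw [lintegral_const_mul]
        exact (((Real.continuous_exp.comp hf.continuous).mul continuous_gdens).measurable :
          Measurable fun x : E => rexp (f x) * gdens n x).ennreal_ofReal
    _ = ENNReal.ofReal (rexp M) := by rw [hν1, mul_one]

lemma sq_le_exp (t : ℝ) (ht : 0 ≤ t) : t^2 ≤ 4 * rexp t := by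
  have h1 := Real.add_one_le_exp (t/2)
  have h2 : rexp (t/2) * rexp (t/2) = rexp t := by
    rw [← Real.exp_add]; norm_num
  nlinarith [Real.exp_pos (t/2)]

lemma abs_f_le (hf : ContDiff ℝ 2 f) (hR : ∀ x, ‖gradient f x‖ ≤ R) (x : E) :
    |f x| ≤ (|f 0| + R) * rexp ‖x‖ := by
  have hR0 : 0 ≤ R := le_trans (norm_nonneg _) (hR 0)
  have h1 := f_lipschitz hf hR x 0
  have h2 := f_lipschitz hf hR 0 x
  rw [sub_zero] at h1
  rw [zero_sub, norm_neg] at h2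
  have h3 : ‖x‖ ≤ rexp ‖x‖ := by
    have := Real.add_one_le_exp ‖x‖
    linarith
  have h4 : (1:ℝ) ≤ rexp ‖x‖ := Real.one_le_exp (norm_nonneg x)
  have h5 : |f x| ≤ |f 0| + R * ‖x‖ := by
    rw [abs_le]
    constructor
    · have := neg_abs_le (f 0)
      linarith
    · have := le_abs_self (f 0)
      linarith
  have h6 : R * ‖x‖ ≤ R * rexp ‖x‖ := mul_le_mul_of_nonneg_left h3 hR0
  nlinarith [abs_nonneg (f 0)]

lemma integrable_f_gauss (hf : ContDiff ℝ 2 f) (hR : ∀ x, ‖gradient f x‖ ≤ R) :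
    Integrable f (stdGaussian n) :=
  integrable_stdGaussian_of_le f hf.continuous.aestronglyMeasurable (|f 0| + R) 1
    (fun x => by simpa using abs_f_le hf hR x)

lemma integrable_Qf_gauss (hf : ContDiff ℝ 2 f) (hR : ∀ x, ‖gradient f x‖ ≤ R) :
    Integrable (Qf f) (stdGaussian n) := by
  apply integrable_stdGaussian_of_le (Qf f) (Qf_continuous hf hR).aestronglyMeasurable
    (|f 0| + R + R^2/2) 1
  intro x
  have h1 := f_le_Qf hf hR x
  have h2 := Qf_le hf hR x
  have h3 := abs_f_le hf hR x
  have h4 : (1:ℝ) ≤ rexp ‖x‖ := Real.one_le_exp (norm_nonneg x)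
  have hR0 : 0 ≤ R := le_trans (norm_nonneg _) (hR 0)
  rw [abs_le] at h3
  rw [one_mul, abs_le]
  have h5 : R^2/2 * 1 ≤ R^2/2 * rexp ‖x‖ := by
    apply mul_le_mul_of_nonneg_left h4 (by positivity)
  constructor
  · nlinarith [h3.1]
  · nlinarith [h3.2]

lemma integral_Qf_le (hf : ContDiff ℝ 2 f) (hR : ∀ x, ‖gradient f x‖ ≤ R)
    (hbdd : ∀ y : E, BddAbove (Set.range fun t : Set.range (gradient f) =>
      ⟪y, (t : E)⟫))
    (hMlb : ∀ x : E, -M ≤ lap f x)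
    (hν1 : ∫⁻ x : E, ENNReal.ofReal (rexp (f x) * gdens n x) = 1)
    (hD : Integrable (gaussWidthFn (Set.range (gradient f))) (stdGaussian n)) :
    ∫ y, Qf f y ∂(stdGaussian n)
      ≤ M + ∫ y, gaussWidthFn (Set.range (gradient f)) y ∂(stdGaussian n) := by
  set h : E → ℝ := gaussWidthFn (Set.range (gradient f)) with hh
  set u : E → ℝ := fun y => Qf f y - h y with hu
  have hγ : IsProbabilityMeasure (stdGaussian n) := inferInstance
  have hInt_Q : Integrable (Qf f) (stdGaussian n) := integrable_Qf_gauss hf hR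
  have hInt_u : Integrable u (stdGaussian n) := hInt_Q.sub hD
  -- transfer the key lintegral bound to the Gaussian measure
  have hukey : ∫⁻ y : E, ENNReal.ofReal (rexp (u y)) ∂(stdGaussian n)
      ≤ ENNReal.ofReal (rexp M) := by
    have hcont_u : Continuous u := (Qf_continuous hf hR).sub (width_continuous hR hbdd)
    have hmg : Measurable fun y : E => ENNReal.ofReal (rexp (u y)) :=
      ((Real.continuous_exp.comp hcont_u).measurable :
        Measurable fun y : E => rexp (u y)).ennreal_ofReal
    rw [stdGaussian_eq, lintegral_withDensity_eq_lintegral_mul _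
      (continuous_gdens.measurable.ennreal_ofReal) hmg]
    have heq : ∀ y : E, ((fun x => ENNReal.ofReal (gdens n x)) *
        fun y => ENNReal.ofReal (rexp (u y))) y
        = ENNReal.ofReal (rexp (Qf f y - h y) * gdens n y) := by
      intro y
      simp only [Pi.mul_apply]
      rw [← ENNReal.ofReal_mul (gdens_pos y).le, mul_comm]
    rw [lintegral_congr heq]
    exact key_lintegral hf hR hbdd hMlb hν1
  -- integrability of exp(u)
  have hInt_expu : Integrable (fun y => rexp (u y)) (stdGaussian n) := by
    constructor
    · exact (Real.continuous_exp.comp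
        ((Qf_continuous hf hR).sub (width_continuous hR hbdd))).aestronglyMeasurable
    · rw [hasFiniteIntegral_iff_ofReal (Filter.Eventually.of_forall
        (fun y => Real.exp_nonneg _))]
      exact lt_of_le_of_lt hukey ENNReal.ofReal_lt_top
  have hint_exp_le : ∫ y, rexp (u y) ∂(stdGaussian n) ≤ rexp M := by
    rw [integral_eq_lintegral_of_nonneg_ae (Filter.Eventually.of_forall
      (fun y => Real.exp_nonneg _)) hInt_expu.aestronglyMeasurable]
    calc (∫⁻ y, ENNReal.ofReal (rexp (u y)) ∂(stdGaussian n)).toReal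
        ≤ (ENNReal.ofReal (rexp M)).toReal :=
          ENNReal.toReal_mono ENNReal.ofReal_ne_top hukey
      _ = rexp M := ENNReal.toReal_ofReal (Real.exp_nonneg _)
  -- Jensen-type step : ∫ u ≤ M
  have hJensen : ∫ y, u y ∂(stdGaussian n) ≤ M := by
    have hpt : ∀ y : E, u y ≤ M + (rexp (u y - M) - 1) := by
      intro y
      have := Real.add_one_le_exp (u y - M)
      linarith
    have hInt_rhs : Integrable (fun y => M + (rexp (u y - M) - 1)) (stdGaussian n) := by
      apply Integrable.add (integrable_const M)
      apply Integrable.sub _ (integrable_const 1)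
      have : (fun y => rexp (u y - M)) = fun y => rexp (-M) * rexp (u y) := by
        funext y
        rw [← Real.exp_add]
        congr 1
        ring
      rw [this]
      exact hInt_expu.const_mul _
    have h1 := integral_mono hInt_u hInt_rhs hpt
    rw [integral_add (integrable_const M)] at h1
    · rw [integral_sub _ (integrable_const 1)] at h1
      · rw [integral_const, integral_const] at h1
        simp only [measure_univ, probReal_univ, ENNReal.toReal_one, one_smul, smul_eq_mul, one_mul] at h1
        have h2 : ∫ y, rexp (u y - M) ∂(stdGaussian n)
            = rexp (-M) * ∫ y, rexp (u y) ∂(stdGaussian n) := by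
          rw [← integral_const_mul]
          apply integral_congr_ae
          filter_upwards with y
          rw [← Real.exp_add]
          congr 1
          ring
        have h3 : rexp (-M) * ∫ y, rexp (u y) ∂(stdGaussian n) ≤ rexp (-M) * rexp M :=
          mul_le_mul_of_nonneg_left hint_exp_le (Real.exp_nonneg _)
        rw [← Real.exp_add] at h3
        simp only [neg_add_cancel, Real.exp_zero] at h3
        linarith [h2 ▸ h1]
      · have : (fun y => rexp (u y - M)) = fun y => rexp (-M) * rexp (u y) := by
          funext y
          rw [← Real.exp_add]
          congr 1
          ring
        rw [this]
        exact hInt_expu.const_mul _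
    · apply Integrable.sub _ (integrable_const 1)
      have : (fun y => rexp (u y - M)) = fun y => rexp (-M) * rexp (u y) := by
        funext y
        rw [← Real.exp_add]
        congr 1
        ring
      rw [this]
      exact hInt_expu.const_mul _
  have hsplit : ∫ y, Qf f y ∂(stdGaussian n)
      = ∫ y, u y ∂(stdGaussian n) + ∫ y, h y ∂(stdGaussian n) := by
    rw [← integral_add hInt_u hD]
    apply integral_congr_ae
    filter_upwards with y
    simp [hu]
  rw [hsplit]
  linarith

lemma integrable_nu_of_le (hf : ContDiff ℝ 2 f) (hR : ∀ x, ‖gradient f x‖ ≤ R)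
    (g : EuclideanSpace ℝ (Fin n) → ℝ)
    (hg : AEStronglyMeasurable g (volume : Measure (EuclideanSpace ℝ (Fin n)))) (C a : ℝ)
    (ha : 0 ≤ a)
    (hb : ∀ x, |g x| ≤ C * rexp (a * ‖x‖)) :
    Integrable g ((stdGaussian n).withDensity fun x => ENNReal.ofReal (rexp (f x))) := by
  have hm : Measurable fun x : E => ENNReal.ofReal (rexp (f x)) :=
    ((Real.continuous_exp.comp hf.continuous).measurable :
      Measurable fun x : E => rexp (f x)).ennreal_ofReal
  rw [integrable_withDensity_iff hm
    (Filter.Eventually.of_forall fun x => ENNReal.ofReal_lt_top)]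
  have heq : (fun x : E => g x * (ENNReal.ofReal (rexp (f x))).toReal)
      = fun x : E => g x * rexp (f x) := by
    funext x
    rw [ENNReal.toReal_ofReal (Real.exp_nonneg _)]
  rw [heq]
  have hR0 : 0 ≤ R := le_trans (norm_nonneg _) (hR 0)
  apply integrable_stdGaussian_of_le _ (hg.mul
    (Real.continuous_exp.comp hf.continuous).aestronglyMeasurable) (C * rexp (f 0)) (a + R)
  intro x
  have h1 : f x ≤ f 0 + R * ‖x‖ := by
    have := f_lipschitz hf hR x 0
    rw [sub_zero] at this
    linarith
  have hC : 0 ≤ C := by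
    have := hb 0
    have h0 := abs_nonneg (g 0)
    simp only [norm_zero, mul_zero, Real.exp_zero, mul_one] at this
    linarith
  show |g x * rexp (f x)| ≤ _
  rw [abs_mul, Real.abs_exp]
  calc |g x| * rexp (f x) ≤ (C * rexp (a * ‖x‖)) * rexp (f 0 + R * ‖x‖) := by
        apply mul_le_mul (hb x) (Real.exp_le_exp.2 h1) (Real.exp_nonneg _)
        positivity
    _ = C * rexp (f 0) * rexp ((a + R) * ‖x‖) := by
        rw [mul_assoc, ← Real.exp_add, mul_assoc, ← Real.exp_add]
        congr 2
        ring
  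
lemma integrable_sq_gauss : Integrable (fun x : E => ‖x‖^2) (stdGaussian n) := by
  apply integrable_stdGaussian_of_le _ (continuous_norm.pow 2).aestronglyMeasurable 4 1
  intro x
  simp only [one_mul, Pi.pow_apply]
  rw [abs_of_nonneg (by positivity : (0:ℝ) ≤ ‖x‖^2)]
  exact sq_le_exp ‖x‖ (norm_nonneg x)

lemma integrable_sq_nu (hf : ContDiff ℝ 2 f) (hR : ∀ x, ‖gradient f x‖ ≤ R) :
    Integrable (fun x : E => ‖x‖^2)
      ((stdGaussian n).withDensity fun x => ENNReal.ofReal (rexp (f x))) := by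
  apply integrable_nu_of_le hf hR _ (continuous_norm.pow 2).aestronglyMeasurable 4 1
    zero_le_one
  intro x
  simp only [one_mul, Pi.pow_apply]
  rw [abs_of_nonneg (by positivity : (0:ℝ) ≤ ‖x‖^2)]
  exact sq_le_exp ‖x‖ (norm_nonneg x)

lemma coupling_bound {ν : Measure (EuclideanSpace ℝ (Fin n))} {M : ℝ}
    (hf : ContDiff ℝ 2 f) (hR : ∀ x, ‖gradient f x‖ ≤ R)
    (hbdd : ∀ y : E, BddAbove (Set.range fun t : Set.range (gradient f) =>
      ⟪y, (t : E)⟫))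
    (hMlb : ∀ x : E, -M ≤ lap f x)
    (hν : ν = (stdGaussian n).withDensity fun x => ENNReal.ofReal (Real.exp (f x)))
    (hprob : IsProbabilityMeasure ν)
    (hent : Integrable f ν)
    (hD : Integrable (gaussWidthFn (Set.range (gradient f))) (stdGaussian n))
    (p : Measure (EuclideanSpace ℝ (Fin n) × EuclideanSpace ℝ (Fin n)))
    (hcpl : IsCoupling p ν (stdGaussian n)) (hp : IsProbabilityMeasure p) :
    ∫ x, f x ∂ν ≤ (1/2) * (∫ q : E × E, ‖q.1 - q.2‖ ^ 2 ∂p)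
      + (M + ∫ y, gaussWidthFn (Set.range (gradient f)) y ∂(stdGaussian n)) := by
  obtain ⟨hmf, hms⟩ := hcpl
  have hν1 : ∫⁻ x : E, ENNReal.ofReal (rexp (f x) * gdens n x) = 1 :=
    nu_lintegral_one (hν ▸ hprob) hf.continuous
  -- integrability on the coupling
  have hIf : Integrable (fun q : E × E => f q.1) p := by
    have h1 : Integrable f (p.map Prod.fst) := hmf ▸ hent
    exact (integrable_map_measure hf.continuous.aestronglyMeasurable
      measurable_fst.aemeasurable).mp h1
  have hIQ : Integrable (fun q : E × E => Qf f q.2) p := by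
    have h1 : Integrable (Qf f) (p.map Prod.snd) := hms ▸ integrable_Qf_gauss hf hR
    exact (integrable_map_measure (Qf_continuous hf hR).aestronglyMeasurable
      measurable_snd.aemeasurable).mp h1
  have hIc1 : Integrable (fun q : E × E => ‖q.1‖^2) p := by
    have h1 : Integrable (fun x : E => ‖x‖^2) (p.map Prod.fst) := by
      rw [hmf, hν]
      exact integrable_sq_nu hf hR
    exact (integrable_map_measure (continuous_norm.pow 2).aestronglyMeasurable
      measurable_fst.aemeasurable).mp h1
  have hIc2 : Integrable (fun q : E × E => ‖q.2‖^2) p := by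
    have h1 : Integrable (fun x : E => ‖x‖^2) (p.map Prod.snd) := hms ▸ integrable_sq_gauss
    exact (integrable_map_measure (continuous_norm.pow 2).aestronglyMeasurable
      measurable_snd.aemeasurable).mp h1
  have hIcost : Integrable (fun q : E × E => ‖q.1 - q.2‖^2) p := by
    apply Integrable.mono ((hIc1.const_mul 2).add (hIc2.const_mul 2))
    · exact ((continuous_fst.sub continuous_snd).norm.pow 2).aestronglyMeasurable
    · filter_upwards with q
      rw [Real.norm_eq_abs, abs_of_nonneg (by positivity : (0:ℝ) ≤ ‖q.1 - q.2‖^2)]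
      have h1 : ‖q.1 - q.2‖ ≤ ‖q.1‖ + ‖q.2‖ := norm_sub_le _ _
      have h2 : ‖q.1 - q.2‖^2 ≤ 2*‖q.1‖^2 + 2*‖q.2‖^2 := by
        nlinarith [norm_nonneg (q.1 - q.2), norm_nonneg q.1, norm_nonneg q.2,
          sq_nonneg (‖q.1‖ - ‖q.2‖)]
      calc ‖q.1 - q.2‖^2 ≤ 2*‖q.1‖^2 + 2*‖q.2‖^2 := h2
        _ ≤ ‖2*‖q.1‖^2 + 2*‖q.2‖^2‖ := le_abs_self _
  -- pointwise bound
  have hpt : ∀ q : E × E, f q.1 ≤ (1/2) * ‖q.1 - q.2‖^2 + Qf f q.2 := by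
    intro q
    have := le_Qf hf hR q.1 q.2
    linarith
  have hmono := integral_mono hIf ((hIcost.const_mul (1/2)).add hIQ) hpt
  simp only [Pi.add_apply] at hmono
  rw [integral_add (hIcost.const_mul (1/2)) hIQ, integral_const_mul] at hmono
  have hfst : ∫ q : E × E, f q.1 ∂p = ∫ x, f x ∂ν := by
    rw [← hmf, integral_map measurable_fst.aemeasurable hf.continuous.aestronglyMeasurable]
  have hsnd : ∫ q : E × E, Qf f q.2 ∂p = ∫ y, Qf f y ∂(stdGaussian n) := by
    rw [← hms, integral_map measurable_snd.aemeasurable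
      (Qf_continuous hf hR).aestronglyMeasurable]
  have hQle := integral_Qf_le hf hR hbdd hMlb hν1 hD
  rw [hfst, hsnd] at hmono
  linarith

end Key

end RevTransport

theorem reverse_transport_inequality (n : ℕ)
    (f : EuclideanSpace ℝ (Fin n) → ℝ) (ν : Measure (EuclideanSpace ℝ (Fin n))) (M : ℝ)
    (hf : ContDiff ℝ 2 f)
    (hν : ν = (stdGaussian n).withDensity fun x => ENNReal.ofReal (Real.exp (f x)))
    (hprob : IsProbabilityMeasure ν)
    (hent : Integrable f ν)
    (hfish : Integrable (fun x => ‖gradient f x‖ ^ 2) ν)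
    (hbdd : ∀ y : EuclideanSpace ℝ (Fin n),
      BddAbove (Set.range fun t : Set.range (gradient f) =>
        ⟪y, (t : EuclideanSpace ℝ (Fin n))⟫))
    (hD : Integrable (gaussWidthFn (Set.range (gradient f))) (stdGaussian n))
    (hM : IsGLB (Set.range (lap f)) (-M)) :
    ∫ x, f x ∂ν
      ≤ (1 / 2) * W2sq ν (stdGaussian n) + M
        + ∫ y, gaussWidthFn (Set.range (gradient f)) y ∂(stdGaussian n) := by
  classical
  obtain ⟨R, hR0, hR⟩ := RevTransport.exists_grad_bound hbdd
  have hMlb : ∀ x : EuclideanSpace ℝ (Fin n), -M ≤ lap f x := fun x =>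
    hM.1 (Set.mem_range_self x)
  set D : ℝ := ∫ y, gaussWidthFn (Set.range (gradient f)) y ∂(stdGaussian n) with hDdef
  set Sset : Set ℝ := {r : ℝ | ∃ p, IsCoupling p ν (stdGaussian n) ∧ IsProbabilityMeasure p ∧
    r = ∫ q, ‖q.1 - q.2‖ ^ 2 ∂p} with hSset
  have hγp : IsProbabilityMeasure (stdGaussian n) := inferInstance
  have hne : Sset.Nonempty := by
    refine ⟨∫ q, ‖q.1 - q.2‖ ^ 2 ∂(ν.prod (stdGaussian n)), ν.prod (stdGaussian n), ?_, ?_, rfl⟩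
    · constructor
      · rw [Measure.map_fst_prod]
        simp [measure_univ]
      · rw [Measure.map_snd_prod]
        simp [measure_univ]
    · infer_instance
  have hbound : ∀ r ∈ Sset, 2 * (∫ x, f x ∂ν - (M + D)) ≤ r := by
    rintro r ⟨p, hcpl, hp, rfl⟩
    have := RevTransport.coupling_bound hf hR hbdd hMlb hν hprob hent hD p hcpl hp
    linarith
  have hcsinf : 2 * (∫ x, f x ∂ν - (M + D)) ≤ sInf Sset := le_csInf hne hbound
  have hW : W2sq ν (stdGaussian n) = sInf Sset := rfl
  rw [hW]
  linarith
end
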